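/- Let $p, w \in [0,1]$, let $X \sim \mathrm{Bernoulli}(p)$ and $Y \sim \mathrm{Poisson}(wp)$. Then $wX$ is smaller than $Y$ in the convex stochastic order: for every convex function $\phi : \mathbb{R} \to \mathbb{R}$ for which the expectations exist, $\mathbb{E}[\phi(wX)] \leq \mathbb{E}[\phi(Y)]$. -/

import Mathlib

lemma real_exp_tsum (x : ℝ) : (∑' n : ℕ, x ^ n / n.factorial) = Real.exp x := by
  rw [Real.exp_eq_exp_ℝ, NormedSpace.exp_eq_tsum_div]

/-- Bernoulli vs Poisson in the convex stochastic order: if `X ~ Bernoulli(p)` and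
`Y ~ Poisson(w*p)` with `p, w ∈ [0,1]`, then `E[φ(wX)] ≤ E[φ(Y)]` for every convex `φ`
whose expectations exist. -/
theorem stmt_2 (p w : ℝ) (hp0 : 0 ≤ p) (hp1 : p ≤ 1) (hw0 : 0 ≤ w) (hw1 : w ≤ 1)
    (φ : ℝ → ℝ) (hφ : ConvexOn ℝ Set.univ φ)
    (hsum : Summable (fun k : ℕ =>
      Real.exp (-(w * p)) * (w * p) ^ k / (Nat.factorial k) * φ k)) :
    (1 - p) * φ 0 + p * φ w ≤
      ∑' k : ℕ, Real.exp (-(w * p)) * (w * p) ^ k / (Nat.factorial k) * φ k := by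
  set L : ℝ := w * p with hL
  have hL0 : 0 ≤ L := mul_nonneg hw0 hp0
  set a : ℝ := φ 1 - φ 0 with ha
  -- lower bound sequence
  set g : ℕ → ℝ := fun k => Real.exp (-L) * L ^ k / (Nat.factorial k) * (φ 0 + k * a)
    with hg
  -- pointwise bound g k ≤ f k
  have hconv : ∀ k : ℕ, 1 ≤ k → φ 0 + (k : ℝ) * a ≤ φ (k : ℝ) := by
    intro k hk
    have hk0 : (0:ℝ) < (k:ℝ) := by exact_mod_cast hk
    have h1 : φ 1 ≤ (1 - 1/(k:ℝ)) * φ 0 + (1/(k:ℝ)) * φ (k:ℝ) := by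
      have hle : 1/(k:ℝ) ≤ 1 := by
        rw [div_le_one hk0]; exact_mod_cast hk
      have := hφ.2 (Set.mem_univ (0:ℝ)) (Set.mem_univ ((k:ℝ)))
        (show (0:ℝ) ≤ 1 - 1/(k:ℝ) by linarith)
        (show (0:ℝ) ≤ 1/(k:ℝ) by positivity)
        (by ring)
      have hk1 : (1 - 1/(k:ℝ)) • (0:ℝ) + (1/(k:ℝ)) • (k:ℝ) = 1 := by
        rw [smul_eq_mul, smul_eq_mul, mul_zero, zero_add]
        field_simp
      rw [hk1] at this
      simpa using this
    have h2 : (k:ℝ) * φ 1 ≤ ((k:ℝ) - 1) * φ 0 + φ (k:ℝ) := by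
      have := mul_le_mul_of_nonneg_left h1 hk0.le
      have hkne : (k:ℝ) ≠ 0 := hk0.ne'
      field_simp at this
      nlinarith [this]
    simp only [ha]; nlinarith [h2]
  have hgle : ∀ k : ℕ, g k ≤ Real.exp (-L) * L ^ k / (Nat.factorial k) * φ k := by
    intro k
    rcases Nat.eq_zero_or_pos k with rfl | hk
    · simp [hg]
    · have hc : 0 ≤ Real.exp (-L) * L ^ k / (Nat.factorial k) := by positivity
      exact mul_le_mul_of_nonneg_left (hconv k hk) hc
  -- summability of g
  have hs1 : Summable (fun k : ℕ => L ^ k / (Nat.factorial k : ℝ)) :=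
    Real.summable_pow_div_factorial L
  have hs2 : Summable (fun k : ℕ => (k : ℝ) * L ^ k / (Nat.factorial k)) := by
    apply (summable_nat_add_iff 1).mp
    have : (fun n : ℕ => ((n+1 : ℕ) : ℝ) * L ^ (n+1) / (Nat.factorial (n+1)))
        = fun n : ℕ => L * (L ^ n / (Nat.factorial n)) := by
      funext n
      have h : (Nat.factorial (n+1) : ℝ) = (n+1) * Nat.factorial n := by
        push_cast [Nat.factorial_succ]; ring
      have hfn : (Nat.factorial n : ℝ) ≠ 0 := by positivity
      rw [h]
      field_simp
      push_cast
      ring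
    rw [this]
    exact hs1.mul_left L
  have hgsum : Summable g := by
    have : g = fun k : ℕ => Real.exp (-L) * φ 0 * (L ^ k / (Nat.factorial k))
        + Real.exp (-L) * a * ((k:ℝ) * L ^ k / (Nat.factorial k)) := by
      funext k; simp only [hg]; ring
    rw [this]
    exact (hs1.mul_left _).add (hs2.mul_left _)
  -- value of tsum g
  have ht1 : (∑' k : ℕ, L ^ k / (Nat.factorial k : ℝ)) = Real.exp L := real_exp_tsum L
  have ht2 : (∑' k : ℕ, (k:ℝ) * L ^ k / (Nat.factorial k)) = L * Real.exp L := by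
    rw [Summable.tsum_eq_zero_add hs2]
    have : (fun n : ℕ => ((n+1 : ℕ) : ℝ) * L ^ (n+1) / (Nat.factorial (n+1)))
        = fun n : ℕ => L * (L ^ n / (Nat.factorial n)) := by
      funext n
      have h : (Nat.factorial (n+1) : ℝ) = (n+1) * Nat.factorial n := by
        push_cast [Nat.factorial_succ]; ring
      have hfn : (Nat.factorial n : ℝ) ≠ 0 := by positivity
      rw [h]; field_simp; push_cast; ring
    rw [this, tsum_mul_left, ht1]
    simp
  have htg : (∑' k : ℕ, g k) = φ 0 + L * a := by
    have hrw : g = fun k : ℕ => Real.exp (-L) * φ 0 * (L ^ k / (Nat.factorial k))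
        + Real.exp (-L) * a * ((k:ℝ) * L ^ k / (Nat.factorial k)) := by
      funext k; simp only [hg]; ring
    rw [hrw, Summable.tsum_add (hs1.mul_left _) (hs2.mul_left _), tsum_mul_left, tsum_mul_left,
      ht1, ht2]
    rw [Real.exp_neg]
    have hE : Real.exp L ≠ 0 := (Real.exp_pos L).ne'
    field_simp
  -- compare
  have hmain : (∑' k : ℕ, g k) ≤ ∑' k : ℕ,
      Real.exp (-(w * p)) * (w * p) ^ k / (Nat.factorial k) * φ k := by
    exact Summable.tsum_le_tsum hgle hgsum hsum
  rw [htg] at hmain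
  refine le_trans ?_ hmain
  -- (1-p) φ0 + p φ w ≤ φ 0 + L * a
  have hw : φ w ≤ (1 - w) * φ 0 + w * φ 1 := by
    have := hφ.2 (Set.mem_univ (0:ℝ)) (Set.mem_univ (1:ℝ))
      (show (0:ℝ) ≤ 1 - w by linarith) hw0 (by ring)
    simpa using this
  have := mul_le_mul_of_nonneg_left hw hp0
  simp only [hL, ha]
  nlinarith [this]
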